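/- arXiv:1304.0269 — 2 statements merged into one kernel-verified Lean document; each statement's English description precedes it below -/
import Mathlib

section
/- For a real number q with 0<q<1 and integers n≥1, l≥0 with l≤n, we have ∑_{k=l+1}^n (1+q^k) · ([n choose k]_q / [n+k choose k]_q) · (-1)^k q^{k(k-1)/2} = (([l]_q - [n]_q)/[n]_q) · ([n choose l]_q / [n+l choose l]_q) · (-1)^l q^{l(l-1)/2}. -/
open Finset

/-- q-analogue of a natural number: [m]_q = (1-q^m)/(1-q). -/
noncomputable def qnum (q : ℝ) (m : ℕ) : ℝ := (1 - q ^ m) / (1 - q)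

/-- q-Pochhammer (q;q)_n = ∏_{k=0}^{n-1} (1 - q^{k+1}). -/
noncomputable def qPoch (q : ℝ) (n : ℕ) : ℝ := ∏ k ∈ Finset.range n, (1 - q ^ (k + 1))

/-- Gaussian q-binomial coefficient, 0 when m > n. -/
noncomputable def qbinom (q : ℝ) (n m : ℕ) : ℝ :=
  if m ≤ n then qPoch q n / (qPoch q m * qPoch q (n - m)) else 0

/-- q-multiple harmonic star sum H_n^*[s₁,…,s_m]. -/
noncomputable def qHstar (q : ℝ) : List ℕ → ℕ → ℝ
  | [], _ => 1
  | s :: rest, n => ∑ k ∈ Finset.Icc 1 n, q ^ k / qnum q k ^ s * qHstar q rest k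

/-- q-multiple zeta star value ζ_q^*[s₁,…,s_m]. -/
noncomputable def qZetaStar (q : ℝ) : List ℕ → ℝ
  | [] => 1
  | s :: rest => ∑' k : ℕ, q ^ (k + 1) / qnum q (k + 1) ^ s * qHstar q rest (k + 1)

/-- strict multiple harmonic sum ∑_{n ≥ k₁ > … > k_r ≥ 1} ∏ 1/k_j^{p_j}. -/
noncomputable def Hstrict : List ℕ → ℕ → ℝ
  | [], _ => 1
  | p :: rest, n => ∑ k ∈ Finset.Icc 1 n, (1 : ℝ) / (k : ℝ) ^ p * Hstrict rest (k - 1)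

/-- binomial-weighted strict multiple harmonic sum Ĥ_n(p). -/
noncomputable def Hhat : List ℕ → ℕ → ℝ
  | [], _ => 1
  | p :: rest, n => ∑ k ∈ Finset.Icc 1 n,
      ((n.choose k : ℝ) / ((n + k).choose n)) * ((1 : ℝ) / (k : ℝ) ^ p) * Hstrict rest (k - 1)

/-- ordinary multiple harmonic star sum H_n^*(s₁,…,s_m). -/
noncomputable def HstarO : List ℕ → ℕ → ℝ
  | [], _ => 1
  | s :: rest, n => ∑ k ∈ Finset.Icc 1 n, (1 : ℝ) / (k : ℝ) ^ s * HstarO rest k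

/-- ordinary multiple zeta star value. -/
noncomputable def zetaStarO : List ℕ → ℝ
  | [] => 1
  | s :: rest => ∑' k : ℕ, (1 : ℝ) / ((k : ℝ) + 1) ^ s * HstarO rest (k + 1)

/-- Merge a list of parts according to a comma(true)/plus(false) pattern. -/
def mergeComp : ℕ → List ℕ → List Bool → List ℕ
  | a, [], _ => [a]
  | a, _ :: _, [] => [a]
  | a, b :: t, true :: bs => a :: mergeComp b t bs
  | a, b :: t, false :: bs => mergeComp (a + b) t bs

lemma qPoch_pos {q : ℝ} (hq0 : 0 < q) (hq1 : q < 1) (n : ℕ) : 0 < qPoch q n := by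
  refine Finset.prod_pos fun k _ => ?_
  have : q ^ (k + 1) < 1 := pow_lt_one₀ hq0.le hq1 (Nat.succ_ne_zero k)
  linarith

lemma one_sub_pow_pos {q : ℝ} (hq0 : 0 < q) (hq1 : q < 1) {m : ℕ} (hm : m ≠ 0) :
    0 < 1 - q ^ m := by
  have : q ^ m < 1 := pow_lt_one₀ hq0.le hq1 hm
  linarith

lemma key {q : ℝ} (hq0 : 0 < q) (hq1 : q < 1) (j m : ℕ) :
    (1 + q ^ (j+1)) * (qbinom q (j+1+m) (j+1) / qbinom q ((j+1+m) + (j+1)) (j+1)) *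
        (-1 : ℝ) ^ (j+1) * q ^ ((j+1) * j / 2)
    + ((qnum q (j+1) - qnum q (j+1+m)) / qnum q (j+1+m)) *
        (qbinom q (j+1+m) (j+1) / qbinom q ((j+1+m) + (j+1)) (j+1)) *
        (-1 : ℝ) ^ (j+1) * q ^ ((j+1) * j / 2)
    = ((qnum q j - qnum q (j+1+m)) / qnum q (j+1+m)) *
        (qbinom q (j+1+m) j / qbinom q ((j+1+m) + j) j) * (-1 : ℝ) ^ j * q ^ (j * (j - 1) / 2) := by
  have h1 : j + 1 ≤ j + 1 + m := by omega
  have h2 : j + 1 ≤ (j+1+m) + (j+1) := by omega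
  have h3 : j ≤ j + 1 + m := by omega
  have h4 : j ≤ (j+1+m) + j := by omega
  have e1 : j + 1 + m - (j + 1) = m := by omega
  have e2 : (j+1+m) + (j+1) - (j+1) = j+1+m := by omega
  have e3 : j + 1 + m - j = m + 1 := by omega
  have e4 : (j+1+m) + j - j = j+1+m := by omega
  have epow : (j+1) * j / 2 = j * (j-1) / 2 + j := by
    have h : (j+1) * j = j * (j-1) + 2 * j := by
      rcases j with _ | j'
      · rfl
      · simp only [Nat.succ_sub_one]; ring
    rw [h, Nat.add_mul_div_left _ _ (by norm_num : 0 < 2)]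
  simp only [qbinom, if_pos h1, if_pos h2, if_pos h3, if_pos h4, e1, e2, e3, e4, qnum]
  have hPm1 : qPoch q (m+1) = qPoch q m * (1 - q ^ (m+1)) := Finset.prod_range_succ _ _
  have hPn1 : qPoch q ((j+1+m)+(j+1)) = qPoch q ((j+1+m)+j) * (1 - q ^ ((j+1+m)+j+1)) := by
    have : (j+1+m)+(j+1) = ((j+1+m)+j) + 1 := by omega
    rw [this, qPoch, Finset.prod_range_succ, ← qPoch]
  rw [hPm1, hPn1, epow, pow_add]
  have hq : (1:ℝ) - q ≠ 0 := by linarith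
  have hPj1 : qPoch q (j+1) ≠ 0 := (qPoch_pos hq0 hq1 _).ne'
  have hPj : qPoch q j ≠ 0 := (qPoch_pos hq0 hq1 _).ne'
  have hPm : qPoch q m ≠ 0 := (qPoch_pos hq0 hq1 _).ne'
  have hPn : qPoch q (j+1+m) ≠ 0 := (qPoch_pos hq0 hq1 _).ne'
  have hPnj : qPoch q ((j+1+m)+j) ≠ 0 := (qPoch_pos hq0 hq1 _).ne'
  have hm1 : (1:ℝ) - q ^ (m+1) ≠ 0 := (one_sub_pow_pos hq0 hq1 (by omega)).ne'
  have hnj1 : (1:ℝ) - q ^ ((j+1+m)+j+1) ≠ 0 := (one_sub_pow_pos hq0 hq1 (by omega)).ne'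
  have hqn : (1:ℝ) - q ^ (j+1+m) ≠ 0 := (one_sub_pow_pos hq0 hq1 (by omega)).ne'
  field_simp
  ring

theorem stmt0 (q : ℝ) (hq0 : 0 < q) (hq1 : q < 1) (n l : ℕ) (hn : 1 ≤ n) (hl : l ≤ n) :
    ∑ k ∈ Finset.Icc (l + 1) n,
      (1 + q ^ k) * (qbinom q n k / qbinom q (n + k) k) * (-1 : ℝ) ^ k * q ^ (k * (k - 1) / 2)
    = ((qnum q l - qnum q n) / qnum q n) * (qbinom q n l / qbinom q (n + l) l) *
        (-1 : ℝ) ^ l * q ^ (l * (l - 1) / 2) := by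
  suffices H : ∀ d l', l' + d = n →
      ∑ k ∈ Finset.Icc (l' + 1) n,
        (1 + q ^ k) * (qbinom q n k / qbinom q (n + k) k) * (-1 : ℝ) ^ k * q ^ (k * (k - 1) / 2)
      = ((qnum q l' - qnum q n) / qnum q n) * (qbinom q n l' / qbinom q (n + l') l') *
          (-1 : ℝ) ^ l' * q ^ (l' * (l' - 1) / 2) by
    exact H (n - l) l (by omega)
  intro d
  induction d with
  | zero =>
    intro l' hl'
    have : l' = n := by omega
    subst this
    rw [Finset.Icc_eq_empty (by omega), Finset.sum_empty, sub_self, zero_div, zero_mul,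
      zero_mul, zero_mul]
  | succ d ih =>
    intro l' hl'
    have hins : Finset.Icc (l' + 1) n = insert (l' + 1) (Finset.Icc (l' + 2) n) := by
      ext x; simp only [Finset.mem_Icc, Finset.mem_insert]; omega
    rw [hins, Finset.sum_insert (by simp only [Finset.mem_Icc]; omega), ih (l' + 1) (by omega)]
    have hn' : n = l' + 1 + d := by omega
    subst hn'
    simpa using key hq0 hq1 l' d
end

section
/- Let 0<q<1 and define F(n,k) = (1+q^k) ([n choose k]_q/[n+k choose k]_q) (-1)^{k-1} q^{k(k-1)/2} and G(n,k) = ((q^{n+k}-1)/(q^k+1)) F(n,k). Then for all positive integers n,k, (1-q^n) F(n,k) = G(n,k+1) - G(n,k). -/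
open Finset

lemma qPoch_succ (q : ℝ) (n : ℕ) : qPoch q (n + 1) = qPoch q n * (1 - q ^ (n + 1)) := by
  unfold qPoch; exact Finset.prod_range_succ _ _

theorem stmt4 (q : ℝ) (hq0 : 0 < q) (hq1 : q < 1)
    (F G : ℕ → ℕ → ℝ)
    (hF : ∀ n k, F n k = (1 + q ^ k) * (qbinom q n k / qbinom q (n + k) k) *
      (-1 : ℝ) ^ (k - 1) * q ^ (k * (k - 1) / 2))
    (hG : ∀ n k, G n k = ((q ^ (n + k) - 1) / (q ^ k + 1)) * F n k)
    (n k : ℕ) (hn : 1 ≤ n) (hk : 1 ≤ k) :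
    (1 - q ^ n) * F n k = G n (k + 1) - G n k := by
  have hP : ∀ m : ℕ, qPoch q m ≠ 0 := fun m => (qPoch_pos hq0 hq1 m).ne'
  have h1q : ∀ m : ℕ, 1 ≤ m → (1 - q ^ m) ≠ 0 := by
    intro m hm
    have : q ^ m < 1 := pow_lt_one₀ hq0.le hq1 (by omega)
    intro h; linarith
  have h2q : ∀ m : ℕ, (q ^ m + 1) ≠ 0 := by
    intro m; positivity
  have h3q : ∀ m : ℕ, (1 + q ^ m) ≠ 0 := by
    intro m; positivity
  rcases lt_trichotomy k n with hkn | rfl | hkn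
  · -- k < n
    obtain ⟨j, rfl⟩ := Nat.exists_eq_add_of_le' hk  -- k = j + 1
    obtain ⟨m, rfl⟩ := Nat.exists_eq_add_of_le (show j + 2 ≤ n by omega)  -- n = j+2+m
    have e1 : qbinom q (j + 2 + m) (j + 1)
        = qPoch q (j + 2 + m) / (qPoch q (j + 1) * qPoch q (m + 1)) := by
      rw [qbinom, if_pos (by omega)]
      have : j + 2 + m - (j + 1) = m + 1 := by omega
      rw [this]
    have e2 : qbinom q (j + 2 + m) (j + 1 + 1)
        = qPoch q (j + 2 + m) / ((qPoch q (j + 1) * (1 - q ^ (j + 2))) * qPoch q m) := by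
      rw [qbinom, if_pos (by omega)]
      have h1 : j + 2 + m - (j + 1 + 1) = m := by omega
      have h2 : (j + 1 + 1) = (j + 1) + 1 := rfl
      rw [h1, h2, qPoch_succ]
    have e3 : qbinom q (j + 2 + m + (j + 1)) (j + 1)
        = qPoch q (j + 2 + m + (j + 1)) / (qPoch q (j + 1) * qPoch q (j + 2 + m)) := by
      rw [qbinom, if_pos (by omega)]
      have : j + 2 + m + (j + 1) - (j + 1) = j + 2 + m := by omega
      rw [this]
    have e4 : qbinom q (j + 2 + m + (j + 1 + 1)) (j + 1 + 1)
        = (qPoch q (j + 2 + m + (j + 1)) * (1 - q ^ (j + 2 + m + (j + 1) + 1)))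
          / ((qPoch q (j + 1) * (1 - q ^ (j + 2))) * qPoch q (j + 2 + m)) := by
      rw [qbinom, if_pos (by omega)]
      have h1 : j + 2 + m + (j + 1 + 1) - (j + 1 + 1) = j + 2 + m := by omega
      have h2 : j + 2 + m + (j + 1 + 1) = (j + 2 + m + (j + 1)) + 1 := by omega
      rw [h1, h2, qPoch_succ, show (j + 1 + 1) = (j + 1) + 1 from rfl, qPoch_succ]
    have eP : qPoch q (m + 1) = qPoch q m * (1 - q ^ (m + 1)) := qPoch_succ q m
    have ht : (j + 1 + 1) * (j + 1) / 2 = (j + 1) * j / 2 + (j + 1) := by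
      have h1 : (j + 1 + 1) * (j + 1) = (j + 1) * j + (j + 1) * 2 := by ring
      rw [h1, Nat.add_mul_div_right _ _ (by norm_num : 0 < 2)]
    have hj : (j + 1 - 1) = j := by omega
    have hj2 : (j + 1 + 1 - 1) = j + 1 := by omega
    have pT : q ^ ((j + 1) * j / 2 + (j + 1)) = q ^ ((j + 1) * j / 2) * q ^ (j + 1) :=
      pow_add q _ _
    have pj : (-1 : ℝ) ^ (j + 1) = (-1 : ℝ) ^ j * (-1) := pow_succ _ _
    have p1 : q ^ (j + 2 + m) = q ^ (j + 1) * q ^ (m + 1) := by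
      rw [← pow_add]; congr 1; omega
    have p2 : q ^ (j + 2) = q ^ (j + 1) * q := by
      rw [← pow_succ]
    have p2' : q ^ (j + 1 + 1) = q ^ (j + 1) * q := by
      rw [← pow_succ]
    have p3 : q ^ (j + 2 + m + (j + 1)) = q ^ (j + 1) * q ^ (j + 1) * q ^ (m + 1) := by
      simp only [← pow_add]; congr 1; omega
    have p4 : q ^ (j + 2 + m + (j + 1) + 1) = q ^ (j + 1) * q ^ (j + 1) * q ^ (m + 1) * q := by
      simp only [← pow_succ, ← pow_add]; congr 1; omega
    have p5 : q ^ (j + 2 + m + (j + 1 + 1)) = q ^ (j + 1) * q ^ (j + 1) * q ^ (m + 1) * q := by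
      simp only [← pow_succ, ← pow_add]; congr 1; omega
    have hb := hP (j + 1)
    have hc := hP m
    have ha := hP (j + 2 + m)
    have hd := hP (j + 2 + m + (j + 1))
    have hA := h1q (m + 1) (by omega)
    have hB : (1 : ℝ) - q ^ (j + 1) * q ≠ 0 := by rw [← p2]; exact h1q (j + 2) (by omega)
    have hC : (1 : ℝ) - q ^ (j + 1) * q ^ (j + 1) * q ^ (m + 1) * q ≠ 0 := by
      rw [← p4]; exact h1q (j + 2 + m + (j + 1) + 1) (by omega)
    have hD := h2q (j + 1)
    have hE : q ^ (j + 1) * q + 1 ≠ 0 := by rw [← p2']; exact h2q (j + 1 + 1)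
    have hD2 := h3q (j + 1)
    have hE2 : (1 : ℝ) + q ^ (j + 1) * q ≠ 0 := by rw [← p2']; exact h3q (j + 1 + 1)
    simp only [hG, hF, e1, e2, e3, e4, eP, hj, hj2, ht, pT, pj, p1, p2, p2', p3, p4, p5]
    set u := q ^ (j + 1) with hu
    set v := q ^ (m + 1) with hv
    set t := q ^ ((j + 1) * j / 2) with htt
    set s := (-1 : ℝ) ^ j with hss
    set a := qPoch q (j + 2 + m) with haa
    set b := qPoch q (j + 1) with hbb
    set c := qPoch q m with hcc
    set d := qPoch q (j + 2 + m + (j + 1)) with hdd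
    have hC' : (1 : ℝ) - u ^ 2 * v * q ≠ 0 := by rw [sq]; exact hC
    field_simp
    ring
  · -- k = n
    have h0 : F k (k + 1) = 0 := by
      rw [hF, qbinom, if_neg (by omega)]
      simp
    rw [hG, hG, h0, mul_zero, zero_sub, pow_add]
    field_simp
    ring
  · -- n < k
    have h0 : F n k = 0 := by
      rw [hF, qbinom, if_neg (by omega)]
      simp
    have h1 : F n (k + 1) = 0 := by
      rw [hF, qbinom, if_neg (by omega)]
      simp
    rw [hG, hG, h0, h1, mul_zero, mul_zero, mul_zero]
    simp
end
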